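/- Let {(x_i, y_i) : i = 0, 1, …, N} be a data set with x₀ < x₁ < ⋯ < x_N, I = [x₀, x_N], and for each i = 1, …, N let l_i : I → [x_{i−1}, x_i] be a homeomorphism with l_i(x₀) = x_{i−1}, l_i(x_N) = x_i. Fix a, b with all y_i ∈ [a,b], and let C*(I) denote the set of continuous functions f : I → [a,b] with f(x_i) = y_i for i = 0, …, N, endowed with the sup metric. Suppose for each k ∈ ℕ the maps F_{i,k} : I × [a,b] → [a,b] are continuous, satisfy F_{i,k}(x₀, y₀) = y_{i−1}, F_{i,k}(x_N, y_N) = y_i, and |F_{i,k}(x, y) − F_{i,k}(x, y')| ≤ φ(|y − y'|) for all x ∈ I, y, y' ∈ [a,b], where φ : [0,∞) → [0,∞) is non-decreasing, φ(t) < t for all t > 0, and Σ_{k=1}^∞ φ^k(t) < ∞ for every t > 0. Define T_k : C*(I) → C*(I) by (T_k f)(x) = F_{i,k}(l_i^{−1}(x), f(l_i^{−1}(x))) for x ∈ [x_{i−1}, x_i]. Then there exists a unique continuous function f* : I → [a,b] with f*(x_i) = y_i for all i = 0, …, N such that for every g ∈ C*(I) the backward trajectories Ψ_k(g) = T₁∘T₂∘⋯∘T_k(g)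 converge uniformly to f*. -/

import Mathlib

open Filter Set Topology

/-- Backward composition: `bwdComp g k = g 0 ∘ g 1 ∘ ⋯ ∘ g (k-1)`
(i.e. `g₁ ∘ g₂ ∘ ⋯ ∘ g_k` in 1-based notation). -/
def bwdComp {α : Type*} (g : ℕ → α → α) : ℕ → α → α
  | 0 => id
  | k + 1 => fun a => bwdComp g k (g k a)

/-- Membership in `C*(I)`: continuous on `I = [x₀, x_N]`, with values in `[a,b]`,
interpolating the data `(x i, y i)`. -/
def InCstar (N : ℕ) (x y : ℕ → ℝ) (a b : ℝ) (f : ℝ → ℝ) : Prop :=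
  ContinuousOn f (Set.Icc (x 0) (x N)) ∧
    (∀ t ∈ Set.Icc (x 0) (x N), f t ∈ Set.Icc a b) ∧
    ∀ i, i ≤ N → f (x i) = y i

lemma nfi_xmono (N : ℕ) (x : ℕ → ℝ) (hx : ∀ i, i < N → x i < x (i + 1)) :
    ∀ i j, i ≤ j → j ≤ N → x i ≤ x j := by
  intro i j hij hjN
  induction j with
  | zero => simp_all
  | succ n ih =>
    rcases Nat.lt_or_ge i (n + 1) with h | h
    · exact le_trans (ih (Nat.lt_succ_iff.mp h) (le_trans (Nat.le_succ n) hjN))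
        (le_of_lt (hx n (Nat.lt_of_succ_le hjN)))
    · have : i = n + 1 := le_antisymm hij h
      simp [this]

lemma nfi_cover (N : ℕ) (hN : 0 < N) (x : ℕ → ℝ)
    (hx : ∀ i, i < N → x i < x (i + 1)) (t : ℝ)
    (ht : t ∈ Set.Icc (x 0) (x N)) :
    ∃ i, i < N ∧ t ∈ Set.Icc (x i) (x (i + 1)) := by
  have hmono := nfi_xmono N x hx
  have hP : ∃ j, j ≤ N ∧ t ≤ x j := ⟨N, le_refl N, ht.2⟩
  classical
  obtain ⟨j, ⟨hjN, hjx⟩, hmin⟩ := Nat.findX hP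
  rcases Nat.eq_zero_or_pos j with rfl | hj
  · refine ⟨0, hN, ht.1, ?_⟩
    exact le_trans hjx (hmono 0 1 (by omega) hN)
  · obtain ⟨m, rfl⟩ := Nat.exists_eq_succ_of_ne_zero (Nat.pos_iff_ne_zero.mp hj)
    refine ⟨m, by omega, ?_, hjx⟩
    by_contra h
    exact hmin m (Nat.lt_succ_self m) ⟨by omega, le_of_not_ge h⟩

noncomputable def nfiPlin (N : ℕ) (x y : ℕ → ℝ) (t : ℝ) : ℝ :=
  y 0 + ∑ i ∈ Finset.range N,
    ((y (i + 1) - y i) / (x (i + 1) - x i)) * (min (max t (x i)) (x (i + 1)) - x i)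

lemma nfiPlin_cont (N : ℕ) (x y : ℕ → ℝ) : Continuous (nfiPlin N x y) := by
  unfold nfiPlin
  refine continuous_const.add (continuous_finset_sum _ fun i _ => ?_)
  exact continuous_const.mul
    (((continuous_id.max continuous_const).min continuous_const).sub continuous_const)

lemma nfiPlin_interp (N : ℕ) (x y : ℕ → ℝ) (hx : ∀ i, i < N → x i < x (i + 1))
    (j : ℕ) (hj : j ≤ N) : nfiPlin N x y (x j) = y j := by
  have hmono := nfi_xmono N x hx
  unfold nfiPlin
  have hterm : ∀ i ∈ Finset.range N,
      ((y (i + 1) - y i) / (x (i + 1) - x i)) * (min (max (x j) (x i)) (x (i + 1)) - x i)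
        = if i < j then y (i + 1) - y i else 0 := by
    intro i hi
    rw [Finset.mem_range] at hi
    by_cases h : i < j
    · have h1 : x i ≤ x j := hmono i j (le_of_lt h) hj
      have h2 : x (i + 1) ≤ x j := hmono (i + 1) j h hj
      have h3 : x i < x (i + 1) := hx i hi
      rw [max_eq_left h1, min_eq_right h2, if_pos h]
      rw [div_mul_eq_mul_div, mul_div_assoc, div_self (by linarith), mul_one]
    · have h1 : x j ≤ x i := hmono j i (le_of_not_gt h) (le_of_lt hi)
      have h2 : x i ≤ x (i + 1) := le_of_lt (hx i hi)
      rw [max_eq_right h1, min_eq_left h2, if_neg h]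
      ring
  rw [Finset.sum_congr rfl hterm, Finset.sum_ite, Finset.sum_const, smul_zero, add_zero]
  have : Finset.filter (fun i => i < j) (Finset.range N) = Finset.range j := by
    ext i; simp [Finset.mem_filter, Finset.mem_range]; omega
  rw [this, Finset.sum_range_sub]
  ring

lemma nfiPlin_eq_on (N : ℕ) (x y : ℕ → ℝ) (hx : ∀ i, i < N → x i < x (i + 1))
    (i : ℕ) (hi : i < N) (t : ℝ) (ht : t ∈ Set.Icc (x i) (x (i + 1))) :
    nfiPlin N x y t = y i + ((y (i + 1) - y i) / (x (i + 1) - x i)) * (t - x i) := by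
  have hmono := nfi_xmono N x hx
  unfold nfiPlin
  have hterm : ∀ i' ∈ Finset.range N,
      ((y (i' + 1) - y i') / (x (i' + 1) - x i')) * (min (max t (x i')) (x (i' + 1)) - x i')
        = if i' < i then y (i' + 1) - y i'
          else if i' = i then ((y (i + 1) - y i) / (x (i + 1) - x i)) * (t - x i) else 0 := by
    intro i' hi'
    rw [Finset.mem_range] at hi'
    rcases lt_trichotomy i' i with h | h | h
    · have h1 : x i' ≤ t := le_trans (hmono i' i (le_of_lt h) (le_of_lt hi)) ht.1
      have h2 : x (i' + 1) ≤ t := le_trans (hmono (i' + 1) i h (le_of_lt hi)) ht.1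
      have h3 : x i' < x (i' + 1) := hx i' hi'
      rw [max_eq_left h1, min_eq_right h2, if_pos h]
      rw [div_mul_eq_mul_div, mul_div_assoc, div_self (by linarith), mul_one]
    · subst h
      rw [max_eq_left ht.1, min_eq_left ht.2, if_neg (lt_irrefl _), if_pos rfl]
    · have h1 : t ≤ x i' := le_trans ht.2 (hmono (i + 1) i' h (le_of_lt hi'))
      have h2 : x i' ≤ x (i' + 1) := le_of_lt (hx i' hi')
      rw [max_eq_right h1, min_eq_left h2, if_neg (by omega), if_neg (by omega)]
      ring
  rw [Finset.sum_congr rfl hterm]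
  rw [Finset.sum_ite, Finset.sum_ite]
  have e1 : Finset.filter (fun i' => i' < i) (Finset.range N) = Finset.range i := by
    ext i'; simp [Finset.mem_filter, Finset.mem_range]; omega
  have e2 : Finset.filter (fun i' => i' = i) (Finset.filter (fun i' => ¬ i' < i) (Finset.range N))
      = {i} := by
    ext i'; simp [Finset.mem_filter, Finset.mem_range]; omega
  rw [e1, e2, Finset.sum_range_sub, Finset.sum_singleton]
  simp
  ring

lemma nfiPlin_mem (N : ℕ) (hN : 0 < N) (x y : ℕ → ℝ)
    (hx : ∀ i, i < N → x i < x (i + 1)) (a b : ℝ)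
    (hy : ∀ i, i ≤ N → y i ∈ Set.Icc a b) (t : ℝ)
    (ht : t ∈ Set.Icc (x 0) (x N)) : nfiPlin N x y t ∈ Set.Icc a b := by
  obtain ⟨i, hi, hti⟩ := nfi_cover N hN x hx t ht
  rw [nfiPlin_eq_on N x y hx i hi t hti]
  have hxi : x i < x (i + 1) := hx i hi
  set r : ℝ := (t - x i) / (x (i + 1) - x i) with hr
  have hr0 : 0 ≤ r := div_nonneg (by linarith [hti.1]) (by linarith)
  have hr1 : r ≤ 1 := by
    rw [div_le_one (by linarith)]
    linarith [hti.2]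
  have heq : ((y (i + 1) - y i) / (x (i + 1) - x i)) * (t - x i) = (y (i + 1) - y i) * r := by
    rw [hr]; field_simp
  rw [heq]
  have h1 := hy i (le_of_lt hi)
  have h2 := hy (i + 1) hi
  simp only [Set.mem_Icc] at h1 h2 ⊢
  constructor
  · nlinarith [h1.1, h2.1]
  · nlinarith [h1.2, h2.2]

/-- For interpolation data `x₀ < x₁ < ⋯ < x_N`, `y i ∈ [a,b]`,
homeomorphisms `l i : I → [x_{i-1}, x_i]` (with inverses `linv i`) matching the
endpoints, and continuous maps `F i k : I × [a,b] → [a,b]` matching the data at the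
endpoints and contractive in the second variable with a common non-decreasing `φ`
satisfying `φ(t) < t` and `∑ₖ φ^k(t) < ∞` for `t > 0`, the backward trajectories
`Ψ_k(g) = T₁∘⋯∘T_k (g)` of the Read–Bajraktarević operators `T_k` converge uniformly
on `I`, for every `g ∈ C*(I)`, to one and the same function `f* : I → [a,b]`, which is
continuous and satisfies `f*(x i) = y i`; such a limit function is unique. -/
theorem nonstationary_fractal_interpolation
    (N : ℕ) (hN : 0 < N) (x y : ℕ → ℝ)
    (hx : ∀ i, i < N → x i < x (i + 1))
    (a b : ℝ) (hy : ∀ i, i ≤ N → y i ∈ Set.Icc a b)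
    (l linv : ℕ → ℝ → ℝ)
    (hl : ∀ i, 1 ≤ i → i ≤ N →
      Set.BijOn (l i) (Set.Icc (x 0) (x N)) (Set.Icc (x (i - 1)) (x i)) ∧
      ContinuousOn (l i) (Set.Icc (x 0) (x N)) ∧
      l i (x 0) = x (i - 1) ∧ l i (x N) = x i)
    (hlinv : ∀ i, 1 ≤ i → i ≤ N → ∀ s ∈ Set.Icc (x (i - 1)) (x i),
      linv i s ∈ Set.Icc (x 0) (x N) ∧ l i (linv i s) = s)
    (hlinv' : ∀ i, 1 ≤ i → i ≤ N → ∀ t ∈ Set.Icc (x 0) (x N), linv i (l i t) = t)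
    (φ : ℝ → ℝ)
    (hφmono : ∀ s t : ℝ, 0 ≤ s → s ≤ t → φ s ≤ φ t)
    (hφ0 : ∀ t : ℝ, 0 ≤ t → 0 ≤ φ t)
    (hφlt : ∀ t : ℝ, 0 < t → φ t < t)
    (hφsum : ∀ t : ℝ, 0 < t → Summable (fun k => φ^[k + 1] t))
    (F : ℕ → ℕ → ℝ → ℝ → ℝ)
    (hFcont : ∀ i k, 1 ≤ i → i ≤ N →
      ContinuousOn (fun p : ℝ × ℝ => F i k p.1 p.2)
        (Set.Icc (x 0) (x N) ×ˢ Set.Icc a b))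
    (hFmap : ∀ i k, 1 ≤ i → i ≤ N → ∀ t ∈ Set.Icc (x 0) (x N), ∀ s ∈ Set.Icc a b,
      F i k t s ∈ Set.Icc a b)
    (hFend : ∀ i k, 1 ≤ i → i ≤ N →
      F i k (x 0) (y 0) = y (i - 1) ∧ F i k (x N) (y N) = y i)
    (hFcontr : ∀ i k, 1 ≤ i → i ≤ N → ∀ t ∈ Set.Icc (x 0) (x N),
      ∀ s ∈ Set.Icc a b, ∀ s' ∈ Set.Icc a b,
        |F i k t s - F i k t s'| ≤ φ |s - s'|)
    -- the Read–Bajraktarević operators `T k : C*(I) → C*(I)`,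
    -- `T k` being the 1-based operator `T_{k+1}`
    (T : ℕ → (ℝ → ℝ) → (ℝ → ℝ))
    (hTmaps : ∀ k g, InCstar N x y a b g → InCstar N x y a b (T k g))
    (hTdef : ∀ k g, InCstar N x y a b g →
      ∀ i, 1 ≤ i → i ≤ N → ∀ s ∈ Set.Icc (x (i - 1)) (x i),
        T k g s = F i (k + 1) (linv i s) (g (linv i s))) :
    ∃ fstar : ℝ → ℝ,
      (ContinuousOn fstar (Set.Icc (x 0) (x N)) ∧
        (∀ t ∈ Set.Icc (x 0) (x N), fstar t ∈ Set.Icc a b) ∧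
        ∀ i, i ≤ N → fstar (x i) = y i) ∧
      (∀ g, InCstar N x y a b g →
        TendstoUniformlyOn (fun k => bwdComp T k g) fstar atTop
          (Set.Icc (x 0) (x N))) ∧
      ∀ f' : ℝ → ℝ,
        (ContinuousOn f' (Set.Icc (x 0) (x N)) ∧
          (∀ t ∈ Set.Icc (x 0) (x N), f' t ∈ Set.Icc a b) ∧
          ∀ i, i ≤ N → f' (x i) = y i) →
        (∀ g, InCstar N x y a b g →
          TendstoUniformlyOn (fun k => bwdComp T k g) f' atTop
            (Set.Icc (x 0) (x N))) →
        Set.EqOn f' fstar (Set.Icc (x 0) (x N)) := by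
  classical
  have hmono := nfi_xmono N x hx
  have hab : a ≤ b := le_trans (hy 0 (Nat.zero_le N)).1 (hy 0 (Nat.zero_le N)).2
  set I : Set ℝ := Set.Icc (x 0) (x N) with hIdef
  set M : ℝ := max (b - a) 1 with hMdef
  have hM1 : 0 < M := lt_of_lt_of_le zero_lt_one (le_max_right _ _)
  have hMba : b - a ≤ M := le_max_left _ _
  -- pointwise bound between any two C* functions
  have hbound : ∀ g h : ℝ → ℝ, InCstar N x y a b g → InCstar N x y a b h →
      ∀ t ∈ I, |g t - h t| ≤ M := by
    intro g h hg hh t ht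
    have h1 := hg.2.1 t ht
    have h2 := hh.2.1 t ht
    rw [Set.mem_Icc] at h1 h2
    rw [abs_sub_le_iff]
    constructor <;> linarith
  set c : ℕ → ℝ := fun k => φ^[k] M with hcdef
  have hc0 : ∀ k, 0 ≤ c k := by
    intro k
    induction k with
    | zero => simpa [hcdef] using le_of_lt hM1
    | succ n ih =>
      have he : c (n + 1) = φ (c n) := Function.iterate_succ_apply' φ n M
      rw [he]
      exact hφ0 _ ih
  have hcsum : Summable c := by
    refine (summable_nat_add_iff 1).mp ?_
    exact hφsum M hM1
  -- pointwise contraction for a single operator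
  have hT1 : ∀ k (g h : ℝ → ℝ), InCstar N x y a b g → InCstar N x y a b h →
      ∀ M' : ℝ, 0 ≤ M' → (∀ t ∈ I, |g t - h t| ≤ M') →
      ∀ t ∈ I, |T k g t - T k h t| ≤ φ M' := by
    intro k g h hg hh M' hM' hgh t ht
    obtain ⟨i, hi, hti⟩ := nfi_cover N hN x hx t ht
    have h1 : 1 ≤ i + 1 := Nat.le_add_left 1 i
    have h2 : i + 1 ≤ N := Nat.succ_le_of_lt hi
    have hti' : t ∈ Set.Icc (x (i + 1 - 1)) (x (i + 1)) := by simpa using hti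
    rw [hTdef k g hg (i + 1) h1 h2 t hti', hTdef k h hh (i + 1) h1 h2 t hti']
    obtain ⟨hu, -⟩ := hlinv (i + 1) h1 h2 t hti'
    have hgu := hg.2.1 _ hu
    have hhu := hh.2.1 _ hu
    calc |F (i + 1) (k + 1) (linv (i + 1) t) (g (linv (i + 1) t)) -
          F (i + 1) (k + 1) (linv (i + 1) t) (h (linv (i + 1) t))|
        ≤ φ |g (linv (i + 1) t) - h (linv (i + 1) t)| :=
          hFcontr (i + 1) (k + 1) h1 h2 _ hu _ hgu _ hhu
      _ ≤ φ M' := hφmono _ _ (abs_nonneg _) (hgh _ hu)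
  -- iterates stay in C*
  have hΨmem : ∀ k (g : ℝ → ℝ), InCstar N x y a b g → InCstar N x y a b (bwdComp T k g) := by
    intro k
    induction k with
    | zero => intro g hg; simpa [bwdComp] using hg
    | succ n ih =>
      intro g hg
      have : bwdComp T (n + 1) g = bwdComp T n (T n g) := by simp [bwdComp]
      rw [this]
      exact ih (T n g) (hTmaps n g hg)
  -- iterated contraction
  have hkey : ∀ k (g h : ℝ → ℝ), InCstar N x y a b g → InCstar N x y a b h →
      ∀ M' : ℝ, 0 ≤ M' → (∀ t ∈ I, |g t - h t| ≤ M') →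
      ∀ t ∈ I, |bwdComp T k g t - bwdComp T k h t| ≤ φ^[k] M' := by
    intro k
    induction k with
    | zero => intro g h hg hh M' hM' hgh t ht; simpa [bwdComp] using hgh t ht
    | succ n ih =>
      intro g h hg hh M' hM' hgh t ht
      have hrec := ih (T n g) (T n h) (hTmaps _ _ hg) (hTmaps _ _ hh) (φ M')
        (hφ0 _ hM') (hT1 n g h hg hh M' hM' hgh) t ht
      have e1 : bwdComp T (n + 1) g = bwdComp T n (T n g) := by simp [bwdComp]
      have e2 : bwdComp T (n + 1) h = bwdComp T n (T n h) := by simp [bwdComp]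
      have e3 : φ^[n + 1] M' = φ^[n] (φ M') := Function.iterate_succ_apply φ n M'
      rw [e1, e2, e3]
      exact hrec
  -- step bound
  have hstep : ∀ k (g : ℝ → ℝ), InCstar N x y a b g →
      ∀ t ∈ I, |bwdComp T (k + 1) g t - bwdComp T k g t| ≤ c k := by
    intro k g hg t ht
    have e1 : bwdComp T (k + 1) g = bwdComp T k (T k g) := by simp [bwdComp]
    rw [e1]
    exact hkey k (T k g) g (hTmaps _ _ hg) hg M (le_of_lt hM1)
      (hbound _ _ (hTmaps _ _ hg) hg) t ht
  -- telescoping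
  have htele : ∀ (g : ℝ → ℝ), InCstar N x y a b g → ∀ m n, m ≤ n → ∀ t ∈ I,
      |bwdComp T n g t - bwdComp T m g t| ≤ ∑ j ∈ Finset.Ico m n, c j := by
    intro g hg m n hmn
    induction n, hmn using Nat.le_induction with
    | base => intro t ht; simp
    | succ n hmn ih =>
      intro t ht
      have h1 := hstep n g hg t ht
      have h2 := ih t ht
      rw [Finset.sum_Ico_succ_top hmn]
      calc |bwdComp T (n + 1) g t - bwdComp T m g t|
          ≤ |bwdComp T (n + 1) g t - bwdComp T n g t| +
            |bwdComp T n g t - bwdComp T m g t| := abs_sub_le _ _ _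
        _ ≤ (∑ j ∈ Finset.Ico m n, c j) + c n := by linarith
  -- the seed function
  set g₀ : ℝ → ℝ := nfiPlin N x y with hg₀def
  have hg₀ : InCstar N x y a b g₀ :=
    ⟨(nfiPlin_cont N x y).continuousOn,
     fun t ht => nfiPlin_mem N hN x y hx a b hy t ht,
     fun i hi => nfiPlin_interp N x y hx i hi⟩
  -- uniform Cauchy
  have hUC : UniformCauchySeqOn (fun k => bwdComp T k g₀) atTop I := by
    rw [Metric.uniformCauchySeqOn_iff]
    intro ε hε
    have htail := tendsto_sum_nat_add c
    obtain ⟨K, hK⟩ := Metric.tendsto_atTop.mp htail ε hε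
    refine ⟨K, ?_⟩
    have main : ∀ m n, K ≤ m → m ≤ n → ∀ t ∈ I,
        |bwdComp T n g₀ t - bwdComp T m g₀ t| < ε := by
      intro m n hKm hmn t ht
      have hsm : Summable (fun j => c (j + m)) := (summable_nat_add_iff m).mpr hcsum
      have h1 : |bwdComp T n g₀ t - bwdComp T m g₀ t| ≤ ∑ j ∈ Finset.Ico m n, c j :=
        htele g₀ hg₀ m n hmn t ht
      have h2 : ∑ j ∈ Finset.Ico m n, c j ≤ ∑' j, c (j + m) := by
        rw [Finset.sum_Ico_eq_sum_range]
        have : ∀ j, c (m + j) = c (j + m) := fun j => by rw [Nat.add_comm]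
        simp_rw [this]
        exact Summable.sum_le_tsum (Finset.range (n - m)) (fun j _ => hc0 _) hsm
      have h3 : ∑' j, c (j + m) < ε := by
        have := hK m hKm
        rw [Real.dist_eq, sub_zero] at this
        exact lt_of_le_of_lt (le_abs_self _) this
      linarith
    intro m hm n hn t ht
    rw [Real.dist_eq]
    rcases le_total m n with h | h
    · rw [abs_sub_comm]
      exact main m n hm h t ht
    · exact main n m hn h t ht
  -- the limit function
  set fstar : ℝ → ℝ := fun t => limUnder atTop (fun k => bwdComp T k g₀ t) with hfdef
  have hptwise : ∀ t ∈ I, Tendsto (fun k => bwdComp T k g₀ t) atTop (𝓝 (fstar t)) :=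
    fun t ht => (hUC.cauchySeq ht).tendsto_limUnder
  have hTU0 : TendstoUniformlyOn (fun k => bwdComp T k g₀) fstar atTop I :=
    hUC.tendstoUniformlyOn_of_tendsto hptwise
  -- properties of fstar
  have hfC : ContinuousOn fstar I :=
    hTU0.continuousOn (Filter.Eventually.of_forall fun k => (hΨmem k g₀ hg₀).1).frequently
  have hfM : ∀ t ∈ I, fstar t ∈ Set.Icc a b := fun t ht =>
    isClosed_Icc.mem_of_tendsto (hptwise t ht)
      (Filter.Eventually.of_forall fun k => (hΨmem k g₀ hg₀).2.1 t ht)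
  have hfI : ∀ i, i ≤ N → fstar (x i) = y i := by
    intro i hi
    have hx_mem : x i ∈ I := ⟨hmono 0 i (Nat.zero_le i) hi, hmono i N hi le_rfl⟩
    have h1 := hptwise (x i) hx_mem
    have h2 : (fun k => bwdComp T k g₀ (x i)) = fun _ => y i :=
      funext fun k => (hΨmem k g₀ hg₀).2.2 i hi
    rw [h2] at h1
    exact (tendsto_nhds_unique h1 tendsto_const_nhds)
  have hczero : Tendsto c atTop (𝓝 0) := hcsum.tendsto_atTop_zero
  -- convergence for every seed
  have hconv : ∀ g, InCstar N x y a b g →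
      TendstoUniformlyOn (fun k => bwdComp T k g) fstar atTop I := by
    intro g hg
    rw [Metric.tendstoUniformlyOn_iff]
    intro ε hε
    have h1 := Metric.tendstoUniformlyOn_iff.mp hTU0 (ε / 2) (half_pos hε)
    have h2 : ∀ᶠ k in atTop, c k < ε / 2 := hczero.eventually (gt_mem_nhds (half_pos hε))
    filter_upwards [h1, h2] with k hk1 hk2 t ht
    have h3 : |bwdComp T k g t - bwdComp T k g₀ t| ≤ c k :=
      hkey k g g₀ hg hg₀ M (le_of_lt hM1) (hbound g g₀ hg hg₀) t ht
    have h4 := hk1 t ht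
    rw [Real.dist_eq] at h4 ⊢
    calc |fstar t - bwdComp T k g t|
        ≤ |fstar t - bwdComp T k g₀ t| + |bwdComp T k g₀ t - bwdComp T k g t| :=
          abs_sub_le _ _ _
      _ < ε := by rw [abs_sub_comm (bwdComp T k g₀ t)] at *; linarith
  refine ⟨fstar, ⟨hfC, hfM, hfI⟩, hconv, ?_⟩
  intro f' hf' hconv' t ht
  exact tendsto_nhds_unique ((hconv' g₀ hg₀).tendsto_at ht) ((hconv g₀ hg₀).tendsto_at ht)
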